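/- Ring-theoretic Nullstellensatz (radical-as-intersection form): let k be an algebraically closed field and I an ideal of k[X₁,…,Xₙ]. Then I(V(I)) = I (where V(I) ⊆ kⁿ is the zero set of I and I(S) the ideal of polynomials vanishing on S ⊆ kⁿ) if and only if I is an intersection of maximal ideals of k[X₁,…,Xₙ]. -/

import Mathlib

/-- ring-theoretic Nullstellensatz, radical-as-intersection form:
for an ideal `I` of `k[X₁,…,Xₙ]` over an algebraically closed field `k`,
`I(V(I)) = I` iff `I` is an intersection of maximal ideals. -/
theorem stmt_15 {k : Type*} [Field k] [IsAlgClosed k] (n : ℕ)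
    (I : Ideal (MvPolynomial (Fin n) k)) :
    (∀ p : MvPolynomial (Fin n) k,
        (∀ a ∈ {a : Fin n → k | ∀ q ∈ I, MvPolynomial.eval a q = 0},
          MvPolynomial.eval a p = 0) ↔ p ∈ I) ↔
      ∃ M : Set (Ideal (MvPolynomial (Fin n) k)),
        (∀ J ∈ M, J.IsMaximal) ∧ I = sInf M := by
  have key : ∀ p : MvPolynomial (Fin n) k,
      ((∀ a ∈ {a : Fin n → k | ∀ q ∈ I, MvPolynomial.eval a q = 0},
          MvPolynomial.eval a p = 0) ↔ p ∈ I.radical) := by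
    intro p
    have := MvPolynomial.vanishingIdeal_zeroLocus_eq_radical (K := k) I
    constructor
    · intro h
      rw [← this]
      exact fun x hx => h x hx
    · intro h a ha
      rw [← this] at h
      exact h a ha
  constructor
  · intro h
    refine ⟨{J | I ≤ J ∧ J.IsMaximal}, fun J hJ => hJ.2, ?_⟩
    have hrad : I.radical = I := by
      ext p
      rw [← key p, h p]
    have : I.radical = I.jacobson := Ideal.radical_eq_jacobson I
    calc I = I.jacobson := by rw [← this, hrad]
    _ = sInf {J | I ≤ J ∧ J.IsMaximal} := rfl
  · rintro ⟨M, hM, rfl⟩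
    intro p
    rw [key p]
    have : (sInf M).radical = sInf M := by
      refine le_antisymm ?_ Ideal.le_radical
      intro x hx
      rw [Ideal.mem_sInf]
      intro J hJ
      have : (sInf M) ≤ J := sInf_le hJ
      exact ((hM J hJ).isPrime.isRadical) (Ideal.radical_mono this hx)
    rw [this]
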